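/- Let λ ∈ (0,1) and set p₀ := ⌊1/λ⌋ + 1. For each integer p ≥ 1 define η_{n,p} := 2^{−n} + (log 2) · n · 2^{−nλp} if λp ≤ 1, and η_{n,p} := (λp/(λp−1)) · 2^{−n} if λp > 1. Then sup over integers p ≥ 1 of ∑_{n=0}^∞ η_{n,p} is at most 2·(1 + 1/(λp₀ − 1)) + 2 + (log 2) · 2^{−λ} / (1 − 2^{−λ})². -/

import Mathlib

theorem stmt_18 (l : ℝ) (hl0 : 0 < l) (hl1 : l < 1)
    (p₀ : ℕ) (hp₀ : p₀ = ⌊1 / l⌋₊ + 1)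
    (η : ℕ → ℕ → ℝ)
    (hη : ∀ n p : ℕ, η n p =
      if l * p ≤ 1 then
        (2:ℝ) ^ (-(n:ℝ)) + Real.log 2 * n * (2:ℝ) ^ (-((n:ℝ) * (l * p)))
      else (l * p / (l * p - 1)) * (2:ℝ) ^ (-(n:ℝ))) :
    ∀ p : ℕ, 1 ≤ p →
      ∑' n : ℕ, η n p
        ≤ 2 * (1 + 1 / (l * p₀ - 1)) + 2 +
            Real.log 2 * (2:ℝ) ^ (-l) / (1 - (2:ℝ) ^ (-l)) ^ 2 := by
  have h2 : ∀ n : ℕ, (2:ℝ) ^ (-(n:ℝ)) = (2⁻¹:ℝ) ^ n := by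
    intro n
    rw [Real.rpow_neg (by norm_num), Real.rpow_natCast, ← inv_pow]
  have hgeo_summable : Summable (fun n : ℕ => (2⁻¹:ℝ) ^ n) :=
    summable_geometric_of_lt_one (by norm_num) (by norm_num)
  have hgeo_sum : ∑' n : ℕ, (2⁻¹:ℝ) ^ n = 2 := by
    rw [tsum_geometric_of_lt_one (by norm_num) (by norm_num)]; norm_num
  set y : ℝ := (2:ℝ) ^ (-l) with hy
  have hy0 : 0 < y := Real.rpow_pos_of_pos (by norm_num) _
  have hy1 : y < 1 := by
    rw [hy]
    exact Real.rpow_lt_one_of_one_lt_of_neg (by norm_num) (by linarith)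
  have hlog2 : 0 < Real.log 2 := Real.log_pos (by norm_num)
  have hp₀1 : 1 < l * p₀ := by
    have h1 : (1:ℝ)/l < p₀ := by
      rw [hp₀]; push_cast
      exact Nat.lt_floor_add_one _
    calc (1:ℝ) = l * (1/l) := by field_simp
    _ < l * p₀ := by exact mul_lt_mul_of_pos_left h1 hl0
  have hT : 0 ≤ Real.log 2 * y / (1 - y)^2 := by positivity
  intro p hp
  have hlp : l ≤ l * p := by
    nth_rewrite 1 [← mul_one l]
    apply mul_le_mul_of_nonneg_left _ hl0.le
    exact_mod_cast hp
  by_cases hc : l * p ≤ 1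
  · set x : ℝ := (2:ℝ) ^ (-(l*(p:ℝ))) with hx
    have hx0 : 0 < x := Real.rpow_pos_of_pos (by norm_num) _
    have hxy : x ≤ y := by
      rw [hx, hy]
      exact Real.rpow_le_rpow_left_iff (x := 2) (by norm_num) |>.mpr (by linarith)
    have hx1 : x < 1 := lt_of_le_of_lt hxy hy1
    have hxn : ∀ n : ℕ, (2:ℝ) ^ (-((n:ℝ) * (l*(p:ℝ)))) = x ^ n := by
      intro n
      rw [hx, ← Real.rpow_natCast ((2:ℝ)^(-(l*(p:ℝ)))) n,
        ← Real.rpow_mul (by norm_num)]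
      congr 1; ring
    have hxnorm : ‖x‖ < 1 := by rw [Real.norm_eq_abs, abs_of_pos hx0]; exact hx1
    have hsum2 : Summable (fun n : ℕ => (n:ℝ) * x ^ n) := by
      have := summable_pow_mul_geometric_of_norm_lt_one 1 hxnorm
      simpa using this
    have hsum2' : Summable (fun n : ℕ => Real.log 2 * ((n:ℝ) * x ^ n)) :=
      hsum2.mul_left _
    have hval : ∑' n : ℕ, η n p
        = 2 + Real.log 2 * (x / (1 - x)^2) := by
      have : ∀ n : ℕ, η n p = (2⁻¹:ℝ) ^ n + Real.log 2 * ((n:ℝ) * x ^ n) := by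
        intro n
        rw [hη n p, if_pos hc, h2, hxn]; ring
      rw [tsum_congr this, hgeo_summable.tsum_add hsum2', hgeo_sum,
        tsum_mul_left, tsum_coe_mul_geometric_of_norm_lt_one hxnorm]
    rw [hval]
    have hdiv : x / (1 - x)^2 ≤ y / (1 - y)^2 := by
      apply div_le_div₀ hy0.le hxy (pow_pos (by linarith) 2)
      exact pow_le_pow_left₀ (by linarith) (by linarith) 2
    have h1 : Real.log 2 * (x / (1 - x)^2) ≤ Real.log 2 * (y / (1 - y)^2) :=
      mul_le_mul_of_nonneg_left hdiv hlog2.le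
    have h2' : (0:ℝ) ≤ 2 * (1 + 1 / (l * p₀ - 1)) := by
      have : 0 < 1 / (l * p₀ - 1) := one_div_pos.mpr (by linarith)
      linarith
    have : Real.log 2 * (y / (1 - y)^2) = Real.log 2 * y / (1 - y)^2 := by ring
    linarith [h1, h2', this ▸ h1]
  · push_neg at hc
    have hpp : p₀ ≤ p := by
      rw [hp₀]
      have : (1:ℝ)/l < p := by
        rw [div_lt_iff₀ hl0, mul_comm]; linarith
      have hfl : ⌊(1:ℝ)/l⌋₊ < p := by
        rw [Nat.floor_lt (by positivity)]
        exact_mod_cast this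
      omega
    have hlpp : l * p₀ ≤ l * p := by
      apply mul_le_mul_of_nonneg_left _ hl0.le
      exact_mod_cast hpp
    have hval : ∑' n : ℕ, η n p = (l * p / (l * p - 1)) * 2 := by
      have : ∀ n : ℕ, η n p = (l * p / (l * p - 1)) * (2⁻¹:ℝ) ^ n := by
        intro n; rw [hη n p, if_neg (not_le.mpr hc), h2]
      rw [tsum_congr this, tsum_mul_left, hgeo_sum]
    rw [hval]
    have hne : l * p - 1 ≠ 0 := by linarith
    have hsplit : l * p / (l * p - 1) = 1 + 1 / (l * p - 1) := by
      field_simp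
      ring
    have hmono : 1 / (l * p - 1) ≤ 1 / (l * p₀ - 1) :=
      one_div_le_one_div_of_le (by linarith) (by linarith)
    rw [hsplit]
    linarith
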